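/- Let F_n^2 (n ≥ 4) be the filiform Leibniz algebra with [e_1,e_1] = e_3 and [e_i,e_1] = e_{i+1} for 3 ≤ i ≤ n−1. A linear map D : F_n^2 → F_n^2 is an anti-derivation if and only if there exist scalars β_1,…,β_{n+2} such that D(e_1) = Σ_{j=1}^n β_j e_j, D(e_2) = β_{n+1}e_2 + β_{n+2}e_n, and D(e_i) = 0 for 3 ≤ i ≤ n. -/
import Mathlib


/-- The bracket of the filiform Leibniz algebra `F_n^2`:
`[e_1,e_1] = e_3`, `[e_i,e_1] = e_{i+1}` for `3 ≤ i ≤ n−1`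
(here `e_i` is `Pi.single (i-1) 1`). -/
def F2br (n : ℕ) (x y : Fin n → ℂ) : Fin n → ℂ := fun i =>
  if h2 : (i : ℕ) = 2 then
    y ⟨0, by have := i.isLt; omega⟩ * x ⟨0, by have := i.isLt; omega⟩
  else if h3 : 3 ≤ (i : ℕ) then
    y ⟨0, by have := i.isLt; omega⟩ * x ⟨(i : ℕ) - 1, by have := i.isLt; omega⟩
  else 0

/-- characterization of the anti-derivations of `F_n^2`. -/
theorem F2_antiderivation_characterization (n : ℕ) (hn : 4 ≤ n)
    (D : (Fin n → ℂ) →ₗ[ℂ] (Fin n → ℂ)) :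
    (∀ x y : Fin n → ℂ, D (F2br n x y) = F2br n (D x) y - F2br n (D y) x) ↔
    (∃ β : Fin (n + 2) → ℂ,
      (∀ j : Fin n, D (Pi.single ⟨0, by omega⟩ 1) j = β ⟨(j : ℕ), by have := j.isLt; omega⟩) ∧
      (∀ j : Fin n, D (Pi.single ⟨1, by omega⟩ 1) j =
        if (j : ℕ) = 1 then β ⟨n, by omega⟩
        else if (j : ℕ) = n - 1 then β ⟨n + 1, by omega⟩
        else 0) ∧
      (∀ i : Fin n, 2 ≤ (i : ℕ) → D (Pi.single i 1) = 0)) := by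
  have h0 : (0:ℕ) < n := by omega
  have h1 : (1:ℕ) < n := by omega
  have h2 : (2:ℕ) < n := by omega
  have hsingle : ∀ i : Fin n, (fun k => if i = k then (1:ℂ) else 0) = Pi.single i 1 := by
    intro i; funext k; simp [Pi.single_apply, eq_comm]
  have hD : ∀ (v : Fin n → ℂ) (j : Fin n),
      D v j = ∑ k : Fin n, v k * D (Pi.single k 1) j := by
    intro v j
    have h := LinearMap.pi_apply_eq_sum_univ D v
    simp only [hsingle] at h
    rw [h]; simp
  have hbr_y0 : ∀ x y : Fin n → ℂ, y ⟨0, h0⟩ = 0 → F2br n x y = 0 := by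
    intro x y hy; funext i; simp only [F2br]
    split_ifs <;> simp [hy]
  have hbr_zero : ∀ y : Fin n → ℂ, F2br n 0 y = 0 := by
    intro y; funext i; simp only [F2br]
    split_ifs <;> simp
  have hbr00 : F2br n (Pi.single (⟨0,h0⟩:Fin n) 1) (Pi.single (⟨0,h0⟩:Fin n) 1)
      = Pi.single (⟨2,h2⟩:Fin n) 1 := by
    funext i
    simp only [F2br, Pi.single_apply, Fin.mk.injEq, Fin.ext_iff]
    split_ifs <;> simp_all <;> omega
  have hbrk0 : ∀ m : ℕ, 3 ≤ m → (hm : m < n) →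
      F2br n (Pi.single (⟨m-1, by omega⟩:Fin n) 1) (Pi.single (⟨0,h0⟩:Fin n) 1)
        = Pi.single (⟨m,hm⟩:Fin n) 1 := by
    intro m hm3 hm; funext i
    simp only [F2br, Pi.single_apply, Fin.mk.injEq, Fin.ext_iff]
    split_ifs <;> simp_all <;> omega
  have hbr10 : F2br n (Pi.single (⟨1,h1⟩:Fin n) 1) (Pi.single (⟨0,h0⟩:Fin n) 1) = 0 := by
    funext i
    simp only [F2br, Pi.single_apply, Fin.mk.injEq, Fin.ext_iff]
    split_ifs <;> simp_all <;> omega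
  constructor
  · intro H
    have key : ∀ m : ℕ, (hm : m < n) → 2 ≤ m → D (Pi.single (⟨m,hm⟩:Fin n) 1) = 0 := by
      intro m
      induction m using Nat.strong_induction_on with
      | _ m ih =>
        intro hm hm2
        rcases eq_or_lt_of_le hm2 with hm2' | hm3
        · subst hm2'
          have hH := H (Pi.single (⟨0,h0⟩:Fin n) 1) (Pi.single (⟨0,h0⟩:Fin n) 1)
          rw [hbr00, sub_self] at hH
          exact hH
        · have hIH : D (Pi.single (⟨m-1, by omega⟩:Fin n) 1) = 0 :=
            ih (m-1) (by omega) (by omega) (by omega)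
          have hH := H (Pi.single (⟨m-1, by omega⟩:Fin n) 1) (Pi.single (⟨0,h0⟩:Fin n) 1)
          rw [hbrk0 m (by omega) hm, hIH, hbr_zero,
            hbr_y0 (D (Pi.single (⟨0,h0⟩:Fin n) 1)) (Pi.single (⟨m-1, by omega⟩:Fin n) 1)
              (Pi.single_eq_of_ne (by simp [Fin.ext_iff]; omega) 1), sub_self] at hH
          exact hH
    have hF : F2br n (D (Pi.single (⟨1,h1⟩:Fin n) 1)) (Pi.single (⟨0,h0⟩:Fin n) 1) = 0 := by
      have hH := H (Pi.single (⟨1,h1⟩:Fin n) 1) (Pi.single (⟨0,h0⟩:Fin n) 1)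
      rw [hbr10, map_zero,
        hbr_y0 (D (Pi.single (⟨0,h0⟩:Fin n) 1)) (Pi.single (⟨1,h1⟩:Fin n) 1)
          (Pi.single_eq_of_ne (by simp [Fin.ext_iff]) 1), sub_zero] at hH
      exact hH.symm
    have hb' : ∀ j : Fin n, (j:ℕ) ≠ 1 → (j:ℕ) ≠ n-1 →
        D (Pi.single (⟨1,h1⟩:Fin n) 1) j = 0 := by
      rintro ⟨jv, hj⟩ hj1 hjn
      simp only [Fin.val_mk] at hj1 hjn
      by_cases hj0 : jv = 0
      · subst hj0
        have h := congrFun hF ⟨2, h2⟩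
        simp [F2br, Pi.single_apply, Fin.ext_iff] at h
        exact h
      · have h := congrFun hF ⟨jv+1, by omega⟩
        simp [F2br, Pi.single_apply, Fin.ext_iff] at h
        rw [dif_neg hj1, dif_pos (by omega)] at h
        exact h
    refine ⟨fun j => if h : (j:ℕ) < n then D (Pi.single (⟨0,h0⟩:Fin n) 1) ⟨j, h⟩
      else if (j:ℕ) = n then D (Pi.single (⟨1,h1⟩:Fin n) 1) ⟨1,h1⟩
      else D (Pi.single (⟨1,h1⟩:Fin n) 1) ⟨n-1, by omega⟩, fun j => ?_, fun j => ?_,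
      fun i hi => ?_⟩
    · beta_reduce
      rw [dif_pos j.isLt]
    · by_cases hj1 : (j:ℕ) = 1
      · rw [if_pos hj1]
        beta_reduce
        rw [dif_neg (show ¬ n < n by omega), if_pos (show n = n from rfl),
          show j = (⟨1,h1⟩:Fin n) from Fin.ext hj1]
      · rw [if_neg hj1]
        by_cases hjn : (j:ℕ) = n - 1
        · rw [if_pos hjn]
          beta_reduce
          rw [dif_neg (show ¬ n + 1 < n by omega), if_neg (show ¬ n + 1 = n by omega),
            show j = (⟨n-1, by omega⟩:Fin n) from Fin.ext hjn]
        · rw [if_neg hjn]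
          exact hb' j hj1 hjn
    · have h := key i.val i.isLt hi
      rwa [Fin.eta] at h
  · rintro ⟨β, hb1, hb2, hb3⟩ x y
    have hDlow : ∀ v : Fin n → ℂ, (∀ j : Fin n, (j:ℕ) ≤ 1 → v j = 0) → D v = 0 := by
      intro v hv; funext j; rw [hD]
      refine Finset.sum_eq_zero fun k _ => ?_
      by_cases hk : 2 ≤ (k:ℕ)
      · rw [hb3 k hk]; simp
      · rw [hv k (by omega), zero_mul]
    have hL : D (F2br n x y) = 0 := by
      refine hDlow _ fun j hj => ?_
      simp only [F2br]
      rw [dif_neg (by omega), dif_neg (by omega)]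
    have hDval : ∀ (v : Fin n → ℂ) (j : Fin n), (j:ℕ) ≠ 1 → (j:ℕ) ≠ n-1 →
        D v j = v ⟨0,h0⟩ * β ⟨(j:ℕ), by have := j.isLt; omega⟩ := by
      intro v j hj1 hjn
      rw [hD, Finset.sum_eq_single (⟨0,h0⟩ : Fin n)]
      · rw [hb1 j]
      · intro k _ hk0
        by_cases hk : 2 ≤ (k:ℕ)
        · rw [hb3 k hk]; simp
        · have hk0' : (k:ℕ) ≠ 0 := fun hh => hk0 (Fin.ext hh)
          have hk1 : k = (⟨1,h1⟩:Fin n) := Fin.ext (show (k:ℕ) = 1 by omega)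
          rw [hk1, hb2 j, if_neg hj1, if_neg hjn, mul_zero]
      · intro h; exact absurd (Finset.mem_univ _) h
    have hR : F2br n (D x) y - F2br n (D y) x = 0 := by
      funext i
      simp only [Pi.sub_apply, Pi.zero_apply, F2br]
      split_ifs with hA hB
      · rw [hDval x ⟨0, by omega⟩ (show (0:ℕ) ≠ 1 by omega) (show (0:ℕ) ≠ n-1 by omega),
          hDval y ⟨0, by omega⟩ (show (0:ℕ) ≠ 1 by omega) (show (0:ℕ) ≠ n-1 by omega)]
        ring
      · rw [hDval x ⟨(i:ℕ)-1, by have := i.isLt; omega⟩ (show (i:ℕ)-1 ≠ 1 by omega)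
            (show (i:ℕ)-1 ≠ n-1 by have := i.isLt; omega),
          hDval y ⟨(i:ℕ)-1, by have := i.isLt; omega⟩ (show (i:ℕ)-1 ≠ 1 by omega)
            (show (i:ℕ)-1 ≠ n-1 by have := i.isLt; omega)]
        ring
      · ring
    rw [hL]
    exact hR.symm
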